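/- arXiv:2009.05497 — 2 statements merged into one kernel-verified Lean document; each statement's English description precedes it below -/
import Mathlib

section
/- The map V defined by V(X)(h,t) = X(t/(1+h), t/(1+h⁻¹)) is a linear isometry of L²(ℝ^× × ℝ^×, dμ×dμ) into itself, where μ is the measure dt/|t| on ℝ \ {0}. In particular, for every X in this L² space, ‖V(X)‖₂ = ‖X‖₂. -/
open MeasureTheory

/-- The measure `dt/|t|` on `ℝ`, Haar measure of `ℝˣ`. -/
noncomputable def mulHaar : Measure ℝ :=
  volume.withDensity fun t => ENNReal.ofReal (1 / |t|)

/-- The operator `V(X)(h,t) = X(t/(1+h), t/(1+h⁻¹))`. -/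
noncomputable def Vop (X : ℝ × ℝ → ℂ) : ℝ × ℝ → ℂ :=
  fun p => X (p.2 / (1 + p.1), p.2 / (1 + p.1⁻¹))

lemma map_mul_left_mulHaar {a : ℝ} (ha : a ≠ 0) :
    Measure.map (fun t => a * t) mulHaar = mulHaar := by
  ext s hs
  rw [Measure.map_apply (measurable_const_mul a) hs]
  unfold mulHaar
  rw [withDensity_apply _ hs, withDensity_apply _ ((measurable_const_mul a) hs)]
  have h1 : ∫⁻ x in s, ENNReal.ofReal (1 / |x|) ∂(Measure.map (fun t => a * t) volume)
      = ∫⁻ t in (fun t => a * t) ⁻¹' s, ENNReal.ofReal (1 / |a * t|) := by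
    rw [Measure.restrict_map (measurable_const_mul a) hs,
      lintegral_map (by fun_prop) (measurable_const_mul a)]
  rw [Real.map_volume_mul_left ha] at h1
  simp only [Measure.restrict_smul, lintegral_smul_measure] at h1
  have h2 : ∀ t : ℝ, ENNReal.ofReal (1 / |a * t|)
      = ENNReal.ofReal (1 / |a|) * ENNReal.ofReal (1 / |t|) := by
    intro t
    rw [abs_mul, ← ENNReal.ofReal_mul (by positivity)]
    congr 1
    rw [one_div, one_div, one_div, mul_inv]
  simp only [h2, lintegral_const_mul' _ _ ENNReal.ofReal_ne_top] at h1
  have ha' : ENNReal.ofReal (1 / |a|) ≠ 0 := by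
    positivity
  rw [abs_inv, ← one_div] at h1
  exact ((ENNReal.mul_right_inj ha' ENNReal.ofReal_ne_top).mp h1).symm

lemma mulHaar_ac : mulHaar ≪ volume := withDensity_absolutelyContinuous _ _

instance : SigmaFinite mulHaar := by
  unfold mulHaar; infer_instance

lemma measurePreserving_T :
    MeasurePreserving (fun p : ℝ × ℝ => (p.2 / (1 + p.1), p.2 / (1 + p.1⁻¹)))
      (mulHaar.prod mulHaar) (mulHaar.prod mulHaar) := by
  -- T' = shear ∘ swap ∘ T₁
  have hT1 : MeasurePreserving (fun p : ℝ × ℝ => (p.1, (1 + p.1)⁻¹ * p.2))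
      (mulHaar.prod mulHaar) (mulHaar.prod mulHaar) := by
    apply MeasurePreserving.skew_product (g := fun h t => (1 + h)⁻¹ * t)
      (MeasurePreserving.id mulHaar) (by fun_prop)
    have h : ∀ᵐ h ∂mulHaar, 1 + h ≠ 0 := by
      refine mulHaar_ac ?_
      have : {h : ℝ | 1 + h ≠ 0}ᶜ = {-1} := by
        ext x
        simp only [Set.mem_compl_iff, Set.mem_setOf_eq, not_not, Set.mem_singleton_iff]
        constructor <;> intro hx <;> linarith
      show volume {h : ℝ | 1 + h ≠ 0}ᶜ = 0
      rw [this]; exact measure_singleton _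
    filter_upwards [h] with h hh
    exact map_mul_left_mulHaar (inv_ne_zero hh)
  have hsw : MeasurePreserving (Prod.swap : ℝ × ℝ → ℝ × ℝ)
      (mulHaar.prod mulHaar) (mulHaar.prod mulHaar) := Measure.measurePreserving_swap
  have hT2 : MeasurePreserving (fun p : ℝ × ℝ => (p.1, p.1 * p.2))
      (mulHaar.prod mulHaar) (mulHaar.prod mulHaar) := by
    apply MeasurePreserving.skew_product (g := fun u h => u * h)
      (MeasurePreserving.id mulHaar) (by fun_prop)
    have h : ∀ᵐ u ∂mulHaar, u ≠ 0 := by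
      refine mulHaar_ac ?_
      show volume {u : ℝ | u ≠ 0}ᶜ = 0
      have : {u : ℝ | u ≠ 0}ᶜ = {0} := by ext x; simp [not_not]
      rw [this]; exact measure_singleton _
    filter_upwards [h] with u hu
    exact map_mul_left_mulHaar hu
  have hcomp := (hT2.comp hsw).comp hT1
  have hmeas : Measurable (fun p : ℝ × ℝ => (p.2 / (1 + p.1), p.2 / (1 + p.1⁻¹))) := by
    fun_prop
  refine ⟨hmeas, ?_⟩
  have hae : (fun p : ℝ × ℝ => (p.2 / (1 + p.1), p.2 / (1 + p.1⁻¹)))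
      =ᵐ[mulHaar.prod mulHaar]
      ((fun p : ℝ × ℝ => (p.1, p.1 * p.2)) ∘ Prod.swap ∘
        fun p : ℝ × ℝ => (p.1, (1 + p.1)⁻¹ * p.2)) := by
    have hnull : (mulHaar.prod mulHaar) (({0, -1} : Set ℝ) ×ˢ (Set.univ : Set ℝ)) = 0 := by
      rw [Measure.prod_prod]
      have h0 : mulHaar ({0, -1} : Set ℝ) = 0 := by
        refine mulHaar_ac ?_
        exact measure_union_null (measure_singleton _) (measure_singleton _)
      simp [h0]
    refine measure_mono_null ?_ hnull
    intro p hp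
    simp only [Set.mem_compl_iff, Set.mem_setOf_eq] at hp ⊢
    by_contra hmem
    simp only [Set.mem_prod, Set.mem_insert_iff, Set.mem_singleton_iff, Set.mem_univ,
      and_true, not_or] at hmem
    obtain ⟨h0, h1⟩ := hmem
    apply hp
    have hh1 : 1 + p.1 ≠ 0 := fun h => h1 (by linarith [eq_neg_of_add_eq_zero_right h])
    simp only [Function.comp_apply, Prod.swap_prod_mk, Prod.mk.injEq]
    constructor
    · rw [div_eq_inv_mul]
    · have : 1 + p.1⁻¹ = (1 + p.1) / p.1 := by field_simp; ring
      rw [this, div_div_eq_mul_div, div_eq_mul_inv]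
      ring
  rw [Measure.map_congr hae]
  exact hcomp.map_eq

/-- The map `V` given by `V(X)(h,t) = X(t/(1+h), t/(1+h⁻¹))` is a linear isometry of
`L²(ℝˣ × ℝˣ, μ × μ)` into itself, where `μ = dt/|t|`; in particular
`‖V(X)‖₂ = ‖X‖₂`. -/
theorem Vop_linear_isometry :
    (∀ X Y : ℝ × ℝ → ℂ, Vop (X + Y) = Vop X + Vop Y) ∧
    (∀ (c : ℂ) (X : ℝ × ℝ → ℂ), Vop (c • X) = c • Vop X) ∧
    (∀ X : ℝ × ℝ → ℂ, MemLp X 2 (mulHaar.prod mulHaar) →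
      MemLp (Vop X) 2 (mulHaar.prod mulHaar) ∧
      eLpNorm (Vop X) 2 (mulHaar.prod mulHaar) = eLpNorm X 2 (mulHaar.prod mulHaar)) := by
  refine ⟨fun X Y => rfl, fun c X => rfl, fun X hX => ?_⟩
  have hT := measurePreserving_T
  have hVX : Vop X = X ∘ (fun p : ℝ × ℝ => (p.2 / (1 + p.1), p.2 / (1 + p.1⁻¹))) := rfl
  constructor
  · rw [hVX]; exact hX.comp_measurePreserving hT
  · rw [hVX]
    exact eLpNorm_comp_measurePreserving hX.aestronglyMeasurable hT
end

section
/- Let ξ₁, ξ₂ ∈ L²(ℝ^×, dt/|t|). For h ∈ ℝ \ {0,−1}, let F(h)(t) = ξ₁(t/(1+h)) · ξ₂(t/(1+h⁻¹)). Then for almost every h (with respect to dh/|h|), F(h) ∈ L²(ℝ^×, dt/|t|), and ∫_{ℝ^×} ‖F(h)‖₂² dh/|h| = ‖ξ₁‖₂² ‖ξ₂‖₂². -/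
open MeasureTheory Set
open scoped ENNReal NNReal

/-- `F(h) = λ(1+h)ξ₁ · λ(1+h⁻¹)ξ₂`, i.e. `F(h)(t) = ξ₁(t/(1+h)) · ξ₂(t/(1+h⁻¹))`. -/
noncomputable def Fprod (ξ₁ ξ₂ : ℝ → ℂ) (h : ℝ) : ℝ → ℂ :=
  fun t => ξ₁ (t / (1 + h)) * ξ₂ (t / (1 + h⁻¹))

instance inst_s7 : SigmaFinite mulHaar := by
  unfold mulHaar; infer_instance

lemma mulHaar_map {a : ℝ} (ha : a ≠ 0) :
    Measure.map (fun t : ℝ => a * t) mulHaar = mulHaar := by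
  ext s hs
  rw [Measure.map_apply (measurable_const_mul a) hs, mulHaar,
    withDensity_apply _ (hs.preimage (measurable_const_mul a)), withDensity_apply _ hs,
    ← lintegral_indicator (hs.preimage (measurable_const_mul a)), ← lintegral_indicator hs]
  have hind : ∀ t : ℝ,
      ((fun t : ℝ => a * t) ⁻¹' s).indicator (fun t => ENNReal.ofReal (1 / |t|)) t
        = s.indicator (fun x => ENNReal.ofReal (|a| / |x|)) (a * t) := by
    intro t
    by_cases ht : a * t ∈ s
    · rw [indicator_of_mem ht, indicator_of_mem (by exact ht)]
      congr 1
      rw [abs_mul, div_mul_eq_div_div, div_self (abs_ne_zero.2 ha)]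
    · rw [indicator_of_notMem ht, indicator_of_notMem (by exact ht)]
  simp_rw [hind]
  have hψ : Measurable (s.indicator fun x : ℝ => ENNReal.ofReal (|a| / |x|)) :=
    ((measurable_const.div measurable_abs).ennreal_ofReal).indicator hs
  rw [← lintegral_map hψ (measurable_const_mul a), Real.map_volume_mul_left ha,
    lintegral_smul_measure, smul_eq_mul, ← lintegral_const_mul _ hψ]
  refine lintegral_congr fun x => ?_
  by_cases hx : x ∈ s
  · rw [indicator_of_mem hx, indicator_of_mem hx, ← ENNReal.ofReal_mul (abs_nonneg _),
      abs_inv, ← mul_div_assoc, inv_mul_cancel₀ (abs_ne_zero.2 ha)]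
  · simp [indicator_of_notMem hx]

lemma mulHaar_mp {a : ℝ} (ha : a ≠ 0) :
    MeasurePreserving (fun t : ℝ => a * t) mulHaar mulHaar :=
  ⟨measurable_const_mul a, mulHaar_map ha⟩

lemma sq_eLpNorm (f : ℝ → ℂ) (μ : Measure ℝ) :
    eLpNorm f 2 μ ^ 2 = ∫⁻ t, (‖f t‖₊ : ℝ≥0∞) ^ 2 ∂μ := by
  rw [eLpNorm_eq_lintegral_rpow_enorm_toReal two_ne_zero ENNReal.ofNat_ne_top]
  simp only [enorm_eq_nnnorm]
  have h2 : ((2 : ℝ≥0∞)).toReal = (2 : ℝ) := by simp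
  rw [h2]
  rw [← ENNReal.rpow_natCast _ 2, ← ENNReal.rpow_mul]
  norm_num

/-- For `ξ₁, ξ₂ ∈ L²(ℝˣ, dt/|t|)`, the pointwise product of translates
`F(h) = λ(1+h)ξ₁ · λ(1+h⁻¹)ξ₂` lies in `L²` for almost every `h` (w.r.t. `dh/|h|`),
and `∫ ‖F(h)‖₂² dh/|h| = ‖ξ₁‖₂² ‖ξ₂‖₂²`. -/
theorem Fprod_ae_memLp_and_integral (ξ₁ ξ₂ : ℝ → ℂ)
    (h₁ : MemLp ξ₁ 2 mulHaar) (h₂ : MemLp ξ₂ 2 mulHaar) :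
    (∀ᵐ h ∂mulHaar, MemLp (Fprod ξ₁ ξ₂ h) 2 mulHaar) ∧
    (∫⁻ h, eLpNorm (Fprod ξ₁ ξ₂ h) 2 mulHaar ^ 2 ∂mulHaar
      = eLpNorm ξ₁ 2 mulHaar ^ 2 * eLpNorm ξ₂ 2 mulHaar ^ 2) := by
  obtain ⟨g₁, hg₁m, hg₁e⟩ := h₁.1
  obtain ⟨g₂, hg₂m, hg₂e⟩ := h₂.1
  have hm₁ : Measurable g₁ := hg₁m.measurable
  have hm₂ : Measurable g₂ := hg₂m.measurable
  set N₁ : ℝ → ℝ≥0∞ := fun u => (‖g₁ u‖₊ : ℝ≥0∞) ^ 2 with hN₁def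
  set N₂ : ℝ → ℝ≥0∞ := fun u => (‖g₂ u‖₊ : ℝ≥0∞) ^ 2 with hN₂def
  have hN₁m : Measurable N₁ := (hm₁.nnnorm.coe_nnreal_ennreal).pow_const 2
  have hN₂m : Measurable N₂ := (hm₂.nnnorm.coe_nnreal_ennreal).pow_const 2
  have habs : mulHaar ≪ (volume : Measure ℝ) := withDensity_absolutelyContinuous _ _
  have hgood : ∀ᵐ h ∂mulHaar, h ≠ 0 ∧ 1 + h ≠ 0 := by
    rw [ae_iff]
    refine measure_mono_null ?_ (habs (((Set.finite_singleton (0:ℝ)).insert (-1)).measure_zero _))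
    intro h hh
    simp only [mem_setOf_eq, not_and_or, not_not] at hh
    simp only [mem_insert_iff, mem_singleton_iff]
    rcases hh with h0 | h1
    · exact Or.inr h0
    · exact Or.inl (by linarith)
  have hu0 : ∀ᵐ u ∂mulHaar, u ≠ 0 := by
    rw [ae_iff]
    refine measure_mono_null ?_ (habs ((Set.finite_singleton (0:ℝ)).measure_zero _))
    intro u hu
    simpa using hu
  -- a.e. identification of Fprod with the measurable version
  have key : ∀ {h : ℝ}, h ≠ 0 → 1 + h ≠ 0 →
      Fprod ξ₁ ξ₂ h =ᵐ[mulHaar] fun t => g₁ (t / (1 + h)) * g₂ (t / (1 + h⁻¹)) := by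
    intro h h0 h1
    have h1' : 1 + h⁻¹ ≠ 0 := by
      have : 1 + h⁻¹ = (1 + h) / h := by field_simp; ring
      rw [this]
      exact div_ne_zero h1 h0
    have e₁ : ξ₁ ∘ (fun t : ℝ => (1 + h)⁻¹ * t) =ᵐ[mulHaar]
        g₁ ∘ (fun t : ℝ => (1 + h)⁻¹ * t) :=
      (mulHaar_mp (inv_ne_zero h1)).quasiMeasurePreserving.ae_eq_comp hg₁e
    have e₂ : ξ₂ ∘ (fun t : ℝ => (1 + h⁻¹)⁻¹ * t) =ᵐ[mulHaar]
        g₂ ∘ (fun t : ℝ => (1 + h⁻¹)⁻¹ * t) :=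
      (mulHaar_mp (inv_ne_zero h1')).quasiMeasurePreserving.ae_eq_comp hg₂e
    filter_upwards [e₁, e₂] with t ht₁ ht₂
    simp only [Function.comp] at ht₁ ht₂
    simp only [Fprod, div_eq_inv_mul, ht₁, ht₂]
  have hB : ∀ {h : ℝ}, h ≠ 0 → 1 + h ≠ 0 →
      (∫⁻ t, N₁ (t / (1 + h)) * N₂ (t / (1 + h⁻¹)) ∂mulHaar)
        = ∫⁻ u, N₁ u * N₂ (u * h) ∂mulHaar := by
    intro h h0 h1
    have hφ : Measurable fun t : ℝ => N₁ (t / (1 + h)) * N₂ (t / (1 + h⁻¹)) :=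
      (hN₁m.comp (measurable_id.div_const _)).mul (hN₂m.comp (measurable_id.div_const _))
    conv_lhs => rw [← mulHaar_map h1]
    rw [lintegral_map hφ (measurable_const_mul _)]
    refine lintegral_congr fun u => ?_
    have eq1 : (1 + h) * u / (1 + h) = u := by field_simp
    have eq2 : (1 + h) * u / (1 + h⁻¹) = u * h := by
      have : 1 + h⁻¹ = (1 + h) / h := by field_simp; ring
      rw [this, div_div_eq_mul_div, mul_comm ((1+h)*u) h, mul_div_assoc,
        mul_div_cancel_left₀ _ h1, mul_comm]
    rw [eq1, eq2]
  have hAE : ∀ᵐ h ∂mulHaar,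
      eLpNorm (Fprod ξ₁ ξ₂ h) 2 mulHaar ^ 2 = (∫⁻ u, N₁ u * N₂ (u * h) ∂mulHaar) ∧
      AEStronglyMeasurable (Fprod ξ₁ ξ₂ h) mulHaar := by
    filter_upwards [hgood] with h hh
    obtain ⟨h0, h1⟩ := hh
    have hkey := key h0 h1
    have hGm : Measurable fun t => g₁ (t / (1 + h)) * g₂ (t / (1 + h⁻¹)) :=
      (hm₁.comp (measurable_id.div_const _)).mul (hm₂.comp (measurable_id.div_const _))
    constructor
    · rw [eLpNorm_congr_ae hkey, sq_eLpNorm]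
      have hpt : ∀ t : ℝ, (‖g₁ (t / (1 + h)) * g₂ (t / (1 + h⁻¹))‖₊ : ℝ≥0∞) ^ 2
          = N₁ (t / (1 + h)) * N₂ (t / (1 + h⁻¹)) := by
        intro t
        rw [hN₁def, hN₂def, nnnorm_mul, ENNReal.coe_mul, mul_pow]
      simp_rw [hpt]
      exact hB h0 h1
    · exact ⟨_, hGm.stronglyMeasurable, hkey⟩
  have hswap : (∫⁻ h, ∫⁻ u, N₁ u * N₂ (u * h) ∂mulHaar ∂mulHaar)
      = ∫⁻ u, ∫⁻ h, N₁ u * N₂ (u * h) ∂mulHaar ∂mulHaar := by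
    refine lintegral_lintegral_swap ?_
    exact ((hN₁m.comp measurable_snd).mul
      (hN₂m.comp (measurable_snd.mul measurable_fst))).aemeasurable
  have hinner : ∀ᵐ u ∂mulHaar,
      (∫⁻ h, N₁ u * N₂ (u * h) ∂mulHaar) = N₁ u * ∫⁻ v, N₂ v ∂mulHaar := by
    filter_upwards [hu0] with u hu
    have hc : Measurable fun h : ℝ => N₂ (u * h) := hN₂m.comp (measurable_const_mul u)
    rw [lintegral_const_mul _ hc]
    congr 1
    conv_rhs => rw [← mulHaar_map hu]
    rw [lintegral_map hN₂m (measurable_const_mul u)]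
  have hnorm₁ : eLpNorm ξ₁ 2 mulHaar ^ 2 = ∫⁻ u, N₁ u ∂mulHaar := by
    rw [eLpNorm_congr_ae hg₁e, sq_eLpNorm]
  have hnorm₂ : eLpNorm ξ₂ 2 mulHaar ^ 2 = ∫⁻ u, N₂ u ∂mulHaar := by
    rw [eLpNorm_congr_ae hg₂e, sq_eLpNorm]
  have main : ∫⁻ h, eLpNorm (Fprod ξ₁ ξ₂ h) 2 mulHaar ^ 2 ∂mulHaar
      = (∫⁻ u, N₁ u ∂mulHaar) * (∫⁻ v, N₂ v ∂mulHaar) := by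
    rw [lintegral_congr_ae (hAE.mono fun h hh => hh.1), hswap,
      lintegral_congr_ae hinner, lintegral_mul_const _ hN₁m]
  refine ⟨?_, by rw [main, hnorm₁, hnorm₂]⟩
  have hKm : Measurable fun h : ℝ => ∫⁻ u, N₁ u * N₂ (u * h) ∂mulHaar := by
    refine Measurable.lintegral_prod_right' (f := fun p : ℝ × ℝ => N₁ p.2 * N₂ (p.2 * p.1)) ?_
    exact (hN₁m.comp measurable_snd).mul (hN₂m.comp (measurable_snd.mul measurable_fst))
  have hfin : ∫⁻ h, ∫⁻ u, N₁ u * N₂ (u * h) ∂mulHaar ∂mulHaar ≠ ⊤ := by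
    rw [hswap, lintegral_congr_ae hinner, lintegral_mul_const _ hN₁m]
    exact ENNReal.mul_ne_top (by rw [← hnorm₁]; exact ENNReal.pow_ne_top h₁.2.ne)
      (by rw [← hnorm₂]; exact ENNReal.pow_ne_top h₂.2.ne)
  filter_upwards [hAE, ae_lt_top hKm hfin] with h hh hlt
  refine ⟨hh.2, ?_⟩
  have hsq : eLpNorm (Fprod ξ₁ ξ₂ h) 2 mulHaar ^ 2 < ⊤ := hh.1 ▸ hlt
  rcases eq_top_or_lt_top (eLpNorm (Fprod ξ₁ ξ₂ h) 2 mulHaar) with he | he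
  · rw [he, pow_two, ENNReal.top_mul_top] at hsq
    exact absurd hsq (lt_irrefl _)
  · exact he
end
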